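/- For every permutation α of {1,…,m} and every integer N ≥ 1, the integer Tr(Σ_{i₁,…,i_m=1}^N X_{i₁ i_{α(1)}} X_{i₂ i_{α(2)}} ⋯ X_{i_m i_{α(m)}}) (the trace of the sum of products of the integer matrices X_{ij}) is divisible by N. -/

import Mathlib

open Matrix

/-- The standard generators `X_{ij} = E_{ij} - E_{N+1-j, N+1-i}` of `so(N)`,
as `N × N` matrices over `ℤ` (indices zero-based, so `N+1-i` becomes `Fin.rev i`). -/
def soGenZ (N : ℕ) (i j : Fin N) : Matrix (Fin N) (Fin N) ℤ :=
  Matrix.single i j 1 - Matrix.single j.rev i.rev 1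

section Slot

variable {ι : Type*} [DecidableEq ι] {R : Type*} [Ring R]

lemma prod_ite_zero (l : List ι) (k : ι) (hk : k ∈ l) (f : ι → R) :
    (l.map fun x => if x = k then (0:R) else f x).prod = 0 := by
  induction l with
  | nil => cases hk
  | cons c t ih =>
    by_cases hc : c = k
    · simp [hc]
    · have hk' : k ∈ t := by
        rcases List.mem_cons.mp hk with h | h
        · exact absurd h.symm hc
        · exact h
      simp [List.prod_cons, hc, ih hk']

lemma map_ite_of_not_mem (t : List ι) (k : ι) (hnt : k ∉ t) (f : ι → R) (Y : R) :
    (t.map fun x => if x = k then Y else f x) = t.map f :=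
  List.map_congr_left fun x hx => if_neg (fun h => hnt (by rw [← h]; exact hx))

lemma prod_ite_add {l : List ι} (hl : l.Nodup) {k : ι} (hk : k ∈ l) (f : ι → R) (Y Z : R) :
    (l.map fun x => if x = k then Y + Z else f x).prod
      = (l.map fun x => if x = k then Y else f x).prod
        + (l.map fun x => if x = k then Z else f x).prod := by
  induction l with
  | nil => cases hk
  | cons c t ih =>
    rcases List.nodup_cons.mp hl with ⟨hct, ht⟩
    by_cases hc : c = k
    · subst hc
      rw [List.map_cons, List.map_cons, List.map_cons, List.prod_cons, List.prod_cons,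
        List.prod_cons, if_pos rfl, if_pos rfl, if_pos rfl,
        map_ite_of_not_mem t c hct, map_ite_of_not_mem t c hct, map_ite_of_not_mem t c hct,
        add_mul]
    · have hk' : k ∈ t := by
        rcases List.mem_cons.mp hk with h | h
        · exact absurd h.symm hc
        · exact h
      rw [List.map_cons, List.map_cons, List.map_cons, List.prod_cons, List.prod_cons,
        List.prod_cons, if_neg hc, if_neg hc, if_neg hc, ih ht hk', mul_add]

lemma prod_ite_neg {l : List ι} (hl : l.Nodup) {k : ι} (hk : k ∈ l) (f : ι → R) (Y : R) :
    (l.map fun x => if x = k then -Y else f x).prod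
      = -(l.map fun x => if x = k then Y else f x).prod := by
  have h := prod_ite_add hl hk f Y (-Y)
  rw [add_neg_cancel, prod_ite_zero l k hk f] at h
  exact eq_neg_of_add_eq_zero_right h.symm

lemma prod_ite_sub {l : List ι} (hl : l.Nodup) {k : ι} (hk : k ∈ l) (f : ι → R) (Y Z : R) :
    (l.map fun x => if x = k then Y - Z else f x).prod
      = (l.map fun x => if x = k then Y else f x).prod
        - (l.map fun x => if x = k then Z else f x).prod := by
  rw [sub_eq_add_neg, sub_eq_add_neg, prod_ite_add hl hk f Y (-Z), prod_ite_neg hl hk f Z]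

lemma prod_ite_ite {l : List ι} {k : ι} (hk : k ∈ l) (f : ι → R) (c : Prop) [Decidable c]
    (Y : R) :
    (l.map fun x => if x = k then (if c then Y else 0) else f x).prod
      = if c then (l.map fun x => if x = k then Y else f x).prod else 0 := by
  by_cases h : c
  · simp only [if_pos h]
  · simp only [if_neg h, prod_ite_zero l k hk f]

lemma comm_list_prod (A : R) (l : List ι) (hl : l.Nodup) (f : ι → R) :
    A * (l.map f).prod - (l.map f).prod * A
      = (l.map fun k =>
          (l.map fun x => if x = k then A * f k - f k * A else f x).prod).sum := by
  induction l with
  | nil => simp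
  | cons c t ih =>
    rcases List.nodup_cons.mp hl with ⟨hct, ht⟩
    rw [List.map_cons, List.map_cons, List.prod_cons, List.sum_cons]
    have h1 : ((c :: t).map fun x => if x = c then A * f c - f c * A else f x).prod
        = (A * f c - f c * A) * (t.map f).prod := by
      rw [List.map_cons, List.prod_cons, if_pos rfl, map_ite_of_not_mem t c hct]
    have h2 : (t.map fun k =>
          ((c :: t).map fun x => if x = k then A * f k - f k * A else f x).prod)
        = t.map fun k => f c *
          (t.map fun x => if x = k then A * f k - f k * A else f x).prod := by
      refine List.map_congr_left fun k hkt => ?_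
      rw [List.map_cons, List.prod_cons, if_neg (fun h => hct (by rw [h]; exact hkt))]
    rw [h1, h2, List.sum_map_mul_left, ← ih ht]
    noncomm_ring

end Slot

section Bracket

variable {N : ℕ}

lemma E_mul_E (a b c d : Fin N) :
    single a b (1:ℤ) * single c d 1
      = if b = c then single a d 1 else 0 := by
  split_ifs with h
  · subst h; rw [Matrix.single_mul_single_same, one_mul]
  · exact Matrix.single_mul_single_of_ne _ _ _ _ h _

lemma soGen_bracket (a b i j : Fin N) :
    soGenZ N a b * soGenZ N i j - soGenZ N i j * soGenZ N a b =
      (if i = b then soGenZ N a j else 0) - (if j = a then soGenZ N i b else 0)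
      - (if i = a.rev then soGenZ N b.rev j else 0)
      + (if j = b.rev then soGenZ N i a.rev else 0) := by
  unfold soGenZ
  simp only [sub_mul, mul_sub, E_mul_E]
  have c1 : (b = i) = (i = b) := propext eq_comm
  have c2 : (b = j.rev) = (j = b.rev) := propext (by rw [eq_comm, Fin.rev_eq_iff])
  have c3 : (a.rev = i) = (i = a.rev) := propext eq_comm
  have c4 : (a.rev = j.rev) = (j = a) := propext (by rw [Fin.rev_inj, eq_comm])
  have c5 : (j = b.rev) = (j = b.rev) := rfl
  have c6 : (i.rev = a) = (i = a.rev) := propext (by rw [Fin.rev_eq_iff])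
  have c7 : (i.rev = b.rev) = (i = b) := propext (by rw [Fin.rev_inj])
  simp only [Fin.rev_rev]
  simp only [c1, c2, c3, c4, c6, c7]
  by_cases h1 : i = b <;> by_cases h2 : j = a <;> by_cases h3 : i = a.rev <;>
    by_cases h4 : j = b.rev <;>
    simp only [h1, h2, h3, h4, if_true, if_false, Fin.rev_rev] <;>
    ((try subst h1); (try subst h2); (try subst h3); (try subst h4)) <;>
      (try split_ifs) <;>
      first
        | abel1
        | (simp_all [Fin.rev_eq_iff, Fin.rev_rev, eq_comm]; try abel1)

end Bracket

theorem Equiv.Perm.apply_inv_self {α : Type*} (f : Equiv.Perm α) (x : α) : f (f⁻¹ x) = x :=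
  f.apply_symm_apply x

theorem Equiv.Perm.inv_apply_self {α : Type*} (f : Equiv.Perm α) (x : α) : f⁻¹ (f x) = x :=
  f.symm_apply_apply x

section Invariance

variable {N m : ℕ}

def Pslot (α : Equiv.Perm (Fin m)) (N : ℕ) (i : Fin m → Fin N) (k : Fin m)
    (Y : Matrix (Fin N) (Fin N) ℤ) : Matrix (Fin N) (Fin N) ℤ :=
  ((List.finRange m).map fun l => if l = k then Y else soGenZ N (i l) (i (α l))).prod

lemma pair_sum (α : Equiv.Perm (Fin m)) (a b : Fin N) (k : Fin m) :
    (∑ i : Fin m → Fin N, if i k = b then Pslot α N i k (soGenZ N a (i (α k))) else 0)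
      = ∑ i : Fin m → Fin N,
          if i k = a then Pslot α N i (α⁻¹ k) (soGenZ N (i (α⁻¹ k)) b) else 0 := by
  classical
  set σ := Equiv.swap a b with hσ
  have hinv : Function.Involutive
      (fun i : Fin m → Fin N => Function.update i k (σ (i k))) := by
    intro i; funext l
    by_cases hl : l = k
    · subst hl; simp [hσ, Equiv.swap_apply_self]
    · simp [Function.update_of_ne hl]
  let T := Function.Involutive.toPerm _ hinv
  rw [← Equiv.sum_comp T
    (fun i => if i k = b then Pslot α N i k (soGenZ N a (i (α k))) else 0)]
  refine Finset.sum_congr rfl fun i _ => ?_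
  have hTi : (T i : Fin m → Fin N) = Function.update i k (σ (i k)) := rfl
  have hTk : (T i : Fin m → Fin N) k = σ (i k) := by rw [hTi]; simp
  by_cases h : i k = a
  · have hσa : σ (i k) = b := by rw [h, hσ]; exact Equiv.swap_apply_left a b
    have hT : (T i : Fin m → Fin N) = Function.update i k b := by rw [hTi, hσa]
    rw [if_pos (by rw [hTk, hσa]), if_pos h, hT]
    unfold Pslot
    refine congrArg List.prod (List.map_congr_left fun l _ => ?_)
    by_cases hl : l = k
    · rw [if_pos hl]
      by_cases hfix : α k = k
      · have hk' : α⁻¹ k = k := α.injective (by rw [Equiv.Perm.apply_inv_self, hfix])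
        rw [if_pos (hl.trans hk'.symm), hfix, Function.update_self, hk', h]
      · have hl2 : ¬ l = α⁻¹ k := by
          rw [hl]; intro hcon
          have h5 : α k = α (α⁻¹ k) := by rw [← hcon]
          rw [Equiv.Perm.apply_inv_self] at h5
          exact hfix h5
        rw [if_neg hl2, Function.update_of_ne hfix, hl, h]
    · by_cases hl2 : l = α⁻¹ k
      · have hal : α l = k := by rw [hl2, Equiv.Perm.apply_inv_self]
        rw [if_neg hl, if_pos hl2, Function.update_of_ne hl, hal, Function.update_self, hl2]
      · have hal : ¬ α l = k := fun hc => hl2 (by rw [← hc, Equiv.Perm.inv_apply_self])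
        rw [if_neg hl, if_neg hl2, Function.update_of_ne hl, Function.update_of_ne hal]
  · have hσa : ¬ σ (i k) = b := by
      intro hc; apply h
      have := σ.injective (hc.trans (Equiv.swap_apply_left a b).symm)
      exact this
    rw [if_neg (by rw [hTk]; exact hσa), if_neg h]

lemma soGen_commute (α : Equiv.Perm (Fin m)) (a b : Fin N) :
    soGenZ N a b * (∑ i : Fin m → Fin N,
        ((List.finRange m).map fun k => soGenZ N (i k) (i (α k))).prod)
      = (∑ i : Fin m → Fin N,
        ((List.finRange m).map fun k => soGenZ N (i k) (i (α k))).prod) * soGenZ N a b := by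
  classical
  rw [Finset.mul_sum, Finset.sum_mul, ← sub_eq_zero, ← Finset.sum_sub_distrib]
  have step1 : ∀ i : Fin m → Fin N,
      soGenZ N a b * ((List.finRange m).map fun k => soGenZ N (i k) (i (α k))).prod
        - ((List.finRange m).map fun k => soGenZ N (i k) (i (α k))).prod * soGenZ N a b
      = ∑ k : Fin m,
          ((if i k = b then Pslot α N i k (soGenZ N a (i (α k))) else 0)
            - (if i (α k) = a then Pslot α N i k (soGenZ N (i k) b) else 0)
            - (if i k = a.rev then Pslot α N i k (soGenZ N b.rev (i (α k))) else 0)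
            + (if i (α k) = b.rev then Pslot α N i k (soGenZ N (i k) a.rev) else 0)) := by
    intro i
    rw [comm_list_prod (soGenZ N a b) (List.finRange m) (List.nodup_finRange m)
      (fun l => soGenZ N (i l) (i (α l)))]
    rw [← Fin.sum_univ_def]
    refine Finset.sum_congr rfl fun k _ => ?_
    have hmem : k ∈ List.finRange m := List.mem_finRange k
    have hnd := List.nodup_finRange m
    rw [soGen_bracket a b (i k) (i (α k))]
    simp only [prod_ite_add hnd hmem, prod_ite_sub hnd hmem, prod_ite_ite hmem, Pslot]
  rw [Finset.sum_congr rfl fun i _ => step1 i, Finset.sum_comm]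
  have hsplit : ∀ k : Fin m,
      (∑ i : Fin m → Fin N,
          ((if i k = b then Pslot α N i k (soGenZ N a (i (α k))) else 0)
            - (if i (α k) = a then Pslot α N i k (soGenZ N (i k) b) else 0)
            - (if i k = a.rev then Pslot α N i k (soGenZ N b.rev (i (α k))) else 0)
            + (if i (α k) = b.rev then Pslot α N i k (soGenZ N (i k) a.rev) else 0)))
      = (∑ i : Fin m → Fin N, if i k = b then Pslot α N i k (soGenZ N a (i (α k))) else 0)
        - (∑ i : Fin m → Fin N, if i (α k) = a then Pslot α N i k (soGenZ N (i k) b) else 0)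
        - (∑ i : Fin m → Fin N, if i k = a.rev then Pslot α N i k (soGenZ N b.rev (i (α k))) else 0)
        + (∑ i : Fin m → Fin N, if i (α k) = b.rev then Pslot α N i k (soGenZ N (i k) a.rev) else 0) := by
    intro k
    rw [Finset.sum_add_distrib, Finset.sum_sub_distrib, Finset.sum_sub_distrib]
  rw [Finset.sum_congr rfl fun k _ => hsplit k]
  rw [Finset.sum_add_distrib, Finset.sum_sub_distrib, Finset.sum_sub_distrib]
  have claim1 :
      (∑ k : Fin m, ∑ i : Fin m → Fin N,
          if i k = b then Pslot α N i k (soGenZ N a (i (α k))) else 0)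
        = ∑ k : Fin m, ∑ i : Fin m → Fin N,
            if i (α k) = a then Pslot α N i k (soGenZ N (i k) b) else 0 := by
    rw [← Equiv.sum_comp (α⁻¹ : Equiv.Perm (Fin m))
      (fun k => ∑ i : Fin m → Fin N,
        if i (α k) = a then Pslot α N i k (soGenZ N (i k) b) else 0)]
    refine Finset.sum_congr rfl fun k _ => ?_
    rw [pair_sum α a b k]
    refine Finset.sum_congr rfl fun i _ => ?_
    rw [Equiv.Perm.apply_inv_self]
  have claim2 :
      (∑ k : Fin m, ∑ i : Fin m → Fin N,
          if i k = a.rev then Pslot α N i k (soGenZ N b.rev (i (α k))) else 0)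
        = ∑ k : Fin m, ∑ i : Fin m → Fin N,
            if i (α k) = b.rev then Pslot α N i k (soGenZ N (i k) a.rev) else 0 := by
    rw [← Equiv.sum_comp (α⁻¹ : Equiv.Perm (Fin m))
      (fun k => ∑ i : Fin m → Fin N,
        if i (α k) = b.rev then Pslot α N i k (soGenZ N (i k) a.rev) else 0)]
    refine Finset.sum_congr rfl fun k _ => ?_
    rw [pair_sum α b.rev a.rev k]
    refine Finset.sum_congr rfl fun i _ => ?_
    rw [Equiv.Perm.apply_inv_self]
  rw [claim1, claim2]
  abel

end Invariance

section Commutant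

variable {N : ℕ}

lemma entry_left (i j p q : Fin N) (M : Matrix (Fin N) (Fin N) ℤ) :
    (single i j (1:ℤ) * M) p q = if p = i then M j q else 0 := by
  by_cases h : p = i
  · subst h; simp
  · simp [h]

lemma entry_right (i j p q : Fin N) (M : Matrix (Fin N) (Fin N) ℤ) :
    (M * single i j (1:ℤ)) p q = if q = j then M p i else 0 := by
  by_cases h : q = j
  · subst h; simp
  · simp [h]

lemma soGen_rel {M : Matrix (Fin N) (Fin N) ℤ} {i j : Fin N}
    (h : soGenZ N i j * M = M * soGenZ N i j) (p q : Fin N) :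
    (if p = i then M j q else 0) - (if p = j.rev then M i.rev q else 0)
      = (if q = j then M p i else 0) - (if q = i.rev then M p j.rev else 0) := by
  have h2 : (soGenZ N i j * M) p q = (M * soGenZ N i j) p q := by rw [h]
  unfold soGenZ at h2
  rw [sub_mul, mul_sub, Matrix.sub_apply, Matrix.sub_apply, entry_left, entry_left,
    entry_right, entry_right] at h2
  exact h2

lemma rev_fix_unique {p q : Fin N} (hp : p.rev = p) (hq : q.rev = q) : p = q := by
  have h1 := congrArg Fin.val hp
  have h2 := congrArg Fin.val hq
  rw [Fin.val_rev] at h1 h2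
  have := p.isLt; have := q.isLt
  exact Fin.ext (by omega)

lemma offdiag_zero {M : Matrix (Fin N) (Fin N) ℤ}
    (h : ∀ i j : Fin N, soGenZ N i j * M = M * soGenZ N i j)
    {p q : Fin N} (hpq : p ≠ q) : M p q = 0 := by
  by_cases hq : q.rev = q
  · have hp : ¬ p = p.rev := fun hc => hpq (rev_fix_unique hc.symm hq)
    have hr := soGen_rel (h p p) p q
    rw [if_pos rfl, if_neg hp, if_neg (fun hc : q = p => hpq hc.symm),
      if_neg (fun hc : q = p.rev => hp (by rw [hc, Fin.rev_rev] at hq; exact hq))] at hr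
    simpa using hr
  · by_cases hp : p = q.rev
    · have hr := soGen_rel (h q q) p q
      rw [if_neg hpq, if_pos hp, if_pos rfl, if_neg (fun hc : q = q.rev => hq hc.symm)] at hr
      have hrpq : q.rev = p := hp.symm ▸ rfl
      rw [hrpq] at hr
      omega
    · have hr := soGen_rel (h q q) p q
      rw [if_neg hpq, if_neg hp, if_pos rfl, if_neg (fun hc : q = q.rev => hq hc.symm)] at hr
      omega

lemma diag_eq {M : Matrix (Fin N) (Fin N) ℤ}
    (h : ∀ i j : Fin N, soGenZ N i j * M = M * soGenZ N i j)
    {p q : Fin N} (hpq : p ≠ q) (hpq2 : p ≠ q.rev) : M p p = M q q := by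
  have hr := soGen_rel (h p q) p q
  have hqp : ¬ q = p.rev := fun hc => hpq2 (by rw [hc, Fin.rev_rev])
  rw [if_pos rfl, if_pos rfl, if_neg hpq2, if_neg hqp] at hr
  omega

lemma diag_const (hN : 3 ≤ N) {M : Matrix (Fin N) (Fin N) ℤ}
    (h : ∀ i j : Fin N, soGenZ N i j * M = M * soGenZ N i j)
    (p : Fin N) : M p p = M ⟨0, by omega⟩ ⟨0, by omega⟩ := by
  set z : Fin N := ⟨0, by omega⟩ with hz
  by_cases h0 : p = z
  · rw [h0]
  · have hvz : (z.rev : Fin N).val = N - 1 := by simp [Fin.val_rev, hz]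
    by_cases h0r : p = z.rev
    · set k : Fin N := ⟨1, by omega⟩ with hk
      have e1 : M p p = M k k := by
        refine (diag_eq h ?_ ?_).symm
        · intro hc
          have := congrArg Fin.val hc
          rw [hk, h0r] at this
          simp [hvz, hz] at this
          omega
        · intro hc
          have := congrArg Fin.val hc
          rw [hk, h0r, Fin.rev_rev, hz] at this
          simp at this
      have e2 : M k k = M z z := by
        refine diag_eq h ?_ ?_
        · intro hc; have := congrArg Fin.val hc; simp [hk, hz] at this
        · intro hc; have := congrArg Fin.val hc; rw [hk] at this; rw [hvz] at this
          simp at this; omega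
      rw [e1, e2]
    · exact diag_eq h h0 h0r

end Commutant

section NTwo

def S2ring : Subring (Matrix (Fin 2) (Fin 2) ℤ) where
  carrier := {A | A 0 1 = 0 ∧ A 1 0 = 0 ∧ (2:ℤ) ∣ (A 0 0 + A 1 1)}
  one_mem' := by
    refine ⟨?_, ?_, ⟨1, ?_⟩⟩ <;> simp [Matrix.one_apply]
  zero_mem' := by
    refine ⟨?_, ?_, ⟨0, ?_⟩⟩ <;> simp
  add_mem' := by
    rintro A B ⟨ha1, ha2, ha3⟩ ⟨hb1, hb2, hb3⟩
    exact ⟨by simp [ha1, hb1], by simp [ha2, hb2],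
      by simp only [Matrix.add_apply]; omega⟩
  neg_mem' := by
    rintro A ⟨ha1, ha2, ha3⟩
    exact ⟨by simp [ha1], by simp [ha2], by simp only [Matrix.neg_apply]; omega⟩
  mul_mem' := by
    rintro A B ⟨ha1, ha2, ha3⟩ ⟨hb1, hb2, hb3⟩
    have e : ∀ p q : Fin 2, (A * B) p q = A p 0 * B 0 q + A p 1 * B 1 q := by
      intro p q; rw [Matrix.mul_apply, Fin.sum_univ_two]
    obtain ⟨x, hx⟩ := ha3
    obtain ⟨y, hy⟩ := hb3
    refine ⟨?_, ?_, ?_⟩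
    · rw [e, ha1, hb1]; ring
    · rw [e, ha2, hb2]; ring
    · rw [e, e, ha1, ha2, hb1, hb2]
      have hA : A 1 1 = 2 * x - A 0 0 := by omega
      have hB : B 1 1 = 2 * y - B 0 0 := by omega
      rw [hA, hB]
      exact ⟨A 0 0 * B 0 0 + 2 * x * y - x * B 0 0 - y * A 0 0, by ring⟩

set_option maxRecDepth 100000 in
lemma soGen_mem_S2ring (i j : Fin 2) : soGenZ 2 i j ∈ S2ring := by
  fin_cases i <;> fin_cases j <;>
    refine ⟨?_, ?_, ⟨0, ?_⟩⟩ <;> decide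

end NTwo

/-- For any permutation `α` of `{1,…,m}` and `N ≥ 1`, the integer
`Tr (Σ_{i₁,…,i_m} X_{i₁ i_{α(1)}} ⋯ X_{i_m i_{α(m)}})` is divisible by `N`:
the standard-representation so(N) weight of `α` divided by `N` is an integer. -/
theorem dvd_soTrace (N m : ℕ) (hN : 1 ≤ N) (α : Equiv.Perm (Fin m)) :
    (N : ℤ) ∣ Matrix.trace (∑ i : Fin m → Fin N,
      ((List.finRange m).map fun k => soGenZ N (i k) (i (α k))).prod) := by
  set M : Matrix (Fin N) (Fin N) ℤ :=
    ∑ i : Fin m → Fin N, ((List.finRange m).map fun k => soGenZ N (i k) (i (α k))).prod with hM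
  rcases Nat.lt_or_ge N 3 with h3 | h3
  · interval_cases N
    · -- N = 1
      simp
    · -- N = 2
      have hmem : M ∈ S2ring := by
        rw [hM]
        refine Subring.sum_mem _ fun i _ => ?_
        refine Subring.list_prod_mem _ fun x hx => ?_
        obtain ⟨k, _, rfl⟩ := List.mem_map.mp hx
        exact soGen_mem_S2ring _ _
      obtain ⟨_, _, hd⟩ := hmem
      rw [Matrix.trace_fin_two]
      exact_mod_cast hd
  · -- N ≥ 3
    have hcomm : ∀ i j : Fin N, soGenZ N i j * M = M * soGenZ N i j := by
      intro i j; rw [hM]; exact soGen_commute α i j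
    have hdiag := diag_const h3 hcomm
    have t1 : Matrix.trace M = ∑ p : Fin N, M p p := rfl
    rw [t1, Finset.sum_congr rfl fun p _ => hdiag p, Finset.sum_const, Finset.card_univ,
      Fintype.card_fin, nsmul_eq_mul]
    exact dvd_mul_right _ _
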